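/- Let V be an open subspace of a topological space with a decomposition induced by an open subset U and closed complement X¹, and let F = i_!(ℤ_U) be the extension by zero of the constant sheaf ℤ on U along the open inclusion i : U → X_crs. If H¹(V, ℤ) = 0, then H¹(V, F) ≅ H⁰(V ∩ X¹, ℤ)/H⁰(V, ℤ). -/

import Mathlib

open CategoryTheory CategoryTheory.Limits TopologicalSpace Opposite

noncomputable section

instance (Y : TopCat) :
    (sheafToPresheaf (Opens.grothendieckTopology Y) AddCommGrpCat).Additive :=
  { map_add := rfl }

/-- The functor of sections over an open set `V`, on the category of abelian sheaves
on a topological space `Y`. -/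
def secΓ (Y : TopCat) (V : Opens Y) :
    Sheaf (Opens.grothendieckTopology Y) AddCommGrpCat ⥤ AddCommGrpCat :=
  sheafToPresheaf _ _ ⋙ (evaluation (Opens Y)ᵒᵖ AddCommGrpCat).obj (op V)

instance (Y : TopCat) (V : Opens Y) : (secΓ Y V).Additive := by
  unfold secΓ; infer_instance

/-- Sheaf cohomology `H^n(V, F)` of abelian sheaves on `Y`, as the `n`-th right derived
functor of the sections-over-`V` functor (sections over `V` of an injective resolution). -/
def sheafH (Y : TopCat)
    [EnoughInjectives (Sheaf (Opens.grothendieckTopology Y) AddCommGrpCat)]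
    (n : ℕ) (V : Opens Y) :
    Sheaf (Opens.grothendieckTopology Y) AddCommGrpCat ⥤ AddCommGrpCat :=
  (secΓ Y V).rightDerived n

instance (Y : TopCat) (V : Opens Y) : PreservesFiniteLimits (secΓ Y V) := by
  unfold secΓ; infer_instance

section Generic
universe w v u
variable {C : Type u} [Category.{v} C] [Abelian C] [EnoughInjectives C]

/-- The cochain complex obtained by augmenting an injective resolution `J` of `S.X₃`
by `S.X₂` in degree `0`. -/
def resK (S : ShortComplex C) (J : InjectiveResolution S.X₃) : CochainComplex C ℕ :=
  CochainComplex.augment J.cocomplex (S.g ≫ J.ι.f 0)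
    ((Category.assoc _ _ _).trans ((congrArg (fun x : S.X₃ ⟶ J.cocomplex.X 1 => S.g ≫ x)
      J.ι_f_zero_comp_complex_d).trans Limits.comp_zero))

/-- Given a short exact sequence `0 → X → I → Q → 0` with `I` injective, an injective
resolution of `X` built by augmenting an injective resolution of `Q`. -/
def resOfSES (S : ShortComplex C) (hS : S.ShortExact) [Injective S.X₂]
    (J : InjectiveResolution S.X₃) : InjectiveResolution S.X₁ := by
  have := hS.mono_f
  have := hS.epi_g
  have hw : S.f ≫ (resK S J).d 0 1 = 0 := by
    show S.f ≫ S.g ≫ J.ι.f 0 = 0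
    exact (Category.assoc _ _ _).symm.trans
      ((congrArg (fun x : S.X₁ ⟶ S.X₃ => x ≫ J.ι.f 0) S.zero).trans zero_comp)
  have hT : (ShortComplex.mk S.f ((resK S J).d 0 1) hw).Exact := by
    have mφ : Mono (J.ι.f 0) := inferInstance
    refine (@ShortComplex.exact_iff_of_epi_of_isIso_of_mono _ _ _
      (S₁ := S) (S₂ := ShortComplex.mk S.f ((resK S J).d 0 1) hw)
      ⟨𝟙 _, 𝟙 _, J.ι.f 0, by simp, by simp [resK]⟩ inferInstance inferInstance mφ).1 hS.exact
  refine
  { cocomplex := resK S J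
    injective := fun n => by
      cases n with
      | zero => exact (inferInstance : Injective S.X₂)
      | succ n => exact (inferInstance : Injective (J.cocomplex.X n))
    ι := (CochainComplex.fromSingle₀Equiv _ _).symm ⟨S.f, hw⟩
    quasiIso := ⟨fun n => ?_⟩ }
  cases n with
  | zero =>
    rw [CochainComplex.quasiIsoAt₀_iff, ShortComplex.quasiIso_iff_of_zeros]
    · refine (ShortComplex.exact_and_mono_f_iff_of_iso
        (S₂ := ShortComplex.mk S.f ((resK S J).d 0 1) hw) ?_).2 ⟨hT, inferInstance⟩
      exact ShortComplex.isoMk (Iso.refl _) (Iso.refl _) (Iso.refl _) (by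
        erw [Category.id_comp, Category.comp_id]
        exact (CochainComplex.fromSingle₀Equiv_symm_apply_f_zero (C := resK S J) S.f hw).symm) (by erw [Category.id_comp, Category.comp_id]; rfl)
    all_goals rfl
  | succ n =>
    rw [quasiIsoAt_iff_exactAt]
    · rw [HomologicalComplex.exactAt_iff' _ n (n + 1) (n + 1 + 1) (by simp) (by simp)]
      cases n with
      | zero =>
        refine (@ShortComplex.exact_iff_of_epi_of_isIso_of_mono _ _ _
          (S₁ := ShortComplex.mk ((resK S J).d 0 1) ((resK S J).d 1 2) ((resK S J).d_comp_d 0 1 2))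
          (S₂ := ShortComplex.mk (J.ι.f 0) (J.cocomplex.d 0 1) J.ι_f_zero_comp_complex_d)
          ⟨S.g, 𝟙 _, 𝟙 _, by simp [resK], by simp [resK]⟩ (by exact hS.epi_g)
          (by exact IsIso.id ((resK S J).X 1)) (by exact (inferInstance : Mono (𝟙 ((resK S J).X 2))))).2 J.exact₀
      | succ n =>
        refine (@ShortComplex.exact_iff_of_epi_of_isIso_of_mono _ _ _
          (S₁ := ShortComplex.mk ((resK S J).d (n+1) (n+2)) ((resK S J).d (n+2) (n+3))
            ((resK S J).d_comp_d _ _ _))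
          (S₂ := ShortComplex.mk (J.cocomplex.d n (n+1)) (J.cocomplex.d (n+1) (n+2))
            (J.cocomplex.d_comp_d _ _ _))
          ⟨𝟙 _, 𝟙 _, 𝟙 _, by simp [resK], by simp [resK]⟩
          (by exact (inferInstance : Epi (𝟙 ((resK S J).X (n+1)))))
          (by exact IsIso.id ((resK S J).X (n+2))) (by exact (inferInstance : Mono (𝟙 ((resK S J).X (n+3)))))).2 (J.exact_succ n)
    · apply CochainComplex.exactAt_succ_single_obj

variable {D : Type w} [Category.{v} D] [Abelian D]
variable (F : C ⥤ D) [F.Additive] [PreservesFiniteLimits F]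

/-- computation of `H¹` of `F` applied to the augmented resolution. -/
def resKHomologyIso (S : ShortComplex C) (J : InjectiveResolution S.X₃) :
    ((F.mapHomologicalComplex (ComplexShape.up ℕ)).obj (resK S J)).homology 1 ≅
      cokernel (F.map S.g) := by
  set M := (F.mapHomologicalComplex (ComplexShape.up ℕ)).obj (resK S J) with hM
  refine ShortComplex.homologyMapIso (M.isoSc' 0 1 2 (by simp) (by simp)) ≪≫ ?_
  set T := M.sc' 0 1 2 with hT
  have wi : F.map (J.ι.f 0) ≫ T.g = 0 := by
    show F.map (J.ι.f 0) ≫ F.map (J.cocomplex.d 0 1) = 0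
    rw [← F.map_comp, J.ι_f_zero_comp_complex_d, F.map_zero]
  have hi : IsLimit (KernelFork.ofι (F.map (J.ι.f 0)) wi) :=
    KernelFork.mapIsLimit J.kernelFork J.isLimitKernelFork F
  -- identify `kernel T.g` with `F.obj S.X₃`
  let e : F.obj S.X₃ ≅ kernel T.g :=
    IsLimit.conePointUniqueUpToIso hi (limit.isLimit (parallelPair T.g 0))
  have he : e.hom ≫ kernel.ι T.g = F.map (J.ι.f 0) := by
    exact IsLimit.conePointUniqueUpToIso_hom_comp hi
      (limit.isLimit (parallelPair T.g 0)) WalkingParallelPair.zero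
  refine T.homologyIsoCokernelLift ≪≫
    cokernel.mapIso _ (F.map S.g) (Iso.refl _) e.symm ?_
  rw [← cancel_mono e.hom]
  simp only [Iso.refl_hom, Category.id_comp, Category.assoc, Iso.symm_hom, Iso.inv_hom_id,
    Category.comp_id]
  rw [← cancel_mono (kernel.ι T.g), kernel.lift_ι, Category.assoc, he]
  erw [Category.id_comp, ← F.map_comp]
  rfl

/-- Dimension shifting: for a SES `0 → X₁ → X₂ → X₃ → 0` with `X₂` injective,
`R¹F(X₁) ≅ coker(F(X₂) → F(X₃))`. -/
def rightDerivedOneIsoCokernel (S : ShortComplex C) (hS : S.ShortExact) [Injective S.X₂] :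
    (F.rightDerived 1).obj S.X₁ ≅ cokernel (F.map S.g) :=
  (resOfSES S hS (InjectiveResolution.of S.X₃)).isoRightDerivedObj F 1 ≪≫
    resKHomologyIso F S (InjectiveResolution.of S.X₃)

section MainChase
variable {C : Type u} [Category.{v} C] [Abelian C]

-- `q : X₃ → I/X₁` induced by `j` is a mono
lemma q_mono (S : ShortComplex C) (hS : S.ShortExact) {I : C} (j : S.X₂ ⟶ I) [Mono j]
    {QQ : C} (p : I ⟶ QQ) (hw : (S.f ≫ j) ≫ p = 0)
    (hmp : (ShortComplex.mk (S.f ≫ j) p hw).Exact)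
    (q : S.X₃ ⟶ QQ) (hq : S.g ≫ q = j ≫ p) : Mono q := by
  have := hS.epi_g
  have := hS.mono_f
  rw [Preadditive.mono_iff_cancel_zero]
  intro A a ha
  obtain ⟨A', π, hπ, b, hb⟩ := surjective_up_to_refinements_of_epi S.g a
  have hbj : (b ≫ j) ≫ p = 0 := by
    rw [Category.assoc, ← hq, ← Category.assoc, ← hb, Category.assoc, ha, comp_zero]
  obtain ⟨A'', π', hπ', x₁, hx₁⟩ := hmp.exact_up_to_refinements (b ≫ j) hbj
  have hx : π' ≫ b = x₁ ≫ S.f := by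
    rw [← cancel_mono j, Category.assoc, Category.assoc]
    simpa using hx₁
  have hz : (π' ≫ π) ≫ a = 0 := by
    rw [Category.assoc, hb, ← Category.assoc, hx, Category.assoc, S.zero, comp_zero]
  have : Epi (π' ≫ π) := epi_comp _ _
  rw [← cancel_epi (π' ≫ π), comp_zero, hz]

-- exactness of `X₃ → I/X₁ → I/X₂` at the middle
lemma qr_exact (S : ShortComplex C) (hS : S.ShortExact) {I : C} (j : S.X₂ ⟶ I) [Mono j]
    {QQ QQ₂ : C} (p : I ⟶ QQ) [Epi p] (p₂ : I ⟶ QQ₂) (hw₂ : j ≫ p₂ = 0)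
    (hjp : (ShortComplex.mk j p₂ hw₂).Exact)
    (q : S.X₃ ⟶ QQ) (hq : S.g ≫ q = j ≫ p)
    (r : QQ ⟶ QQ₂) (hpr : p ≫ r = p₂) (hqr : q ≫ r = 0) :
    (ShortComplex.mk q r hqr).Exact := by
  rw [ShortComplex.exact_iff_exact_up_to_refinements]
  intro A z hz
  obtain ⟨A', π, hπ, y, hy⟩ := surjective_up_to_refinements_of_epi p z
  have hy2 : y ≫ p₂ = 0 := by
    rw [← hpr, ← Category.assoc, ← hy, Category.assoc, hz, comp_zero]
  obtain ⟨A'', π', hπ', x₂, hx₂⟩ := hjp.exact_up_to_refinements y hy2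
  refine ⟨A'', π' ≫ π, epi_comp _ _, x₂ ≫ S.g, ?_⟩
  show (π' ≫ π) ≫ z = (x₂ ≫ S.g) ≫ q
  conv_rhs => rw [Category.assoc, hq, ← Category.assoc, ← hx₂, Category.assoc, ← hy,
    ← Category.assoc]

end MainChase

end Generic

set_option maxHeartbeats 2000000 in
/-- let `U ⊆ Y` be open with closed complement `X¹` (with inclusion `ι`),
and let `F = i_!(ℤ_U)` be the extension by zero of the constant sheaf `ℤ` on `U`,
i.e. the abelian sheaf fitting into the canonical short exact sequence
`0 → F → ℤ_Y → ℤ_{X¹} → 0`, where `ℤ_Y` is the constant sheaf `ℤ` on `Y` and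
`ℤ_{X¹}` is the pushforward to `Y` of the constant sheaf `ℤ` on `X¹`.
If `H¹(V, ℤ) = 0` for an open `V ⊆ Y`, then
`H¹(V, F) ≅ H⁰(V ∩ X¹, ℤ)/H⁰(V, ℤ)`, i.e. `H¹(V, F)` is the cokernel of
`H⁰(V, ℤ_Y) → H⁰(V, ℤ_{X¹}) = H⁰(V ∩ X¹, ℤ)`. -/
theorem H1_of_extension_by_zero (Y : TopCat)
    [EnoughInjectives (Sheaf (Opens.grothendieckTopology Y) AddCommGrpCat)]
    (U : Opens Y) (ι : TopCat.of (((U : Set Y)ᶜ : Set Y)) ⟶ Y)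
    (hι : ∀ z, ι z = z.1)
    (S : ShortComplex (Sheaf (Opens.grothendieckTopology Y) AddCommGrpCat))
    (hS : S.ShortExact)
    (hX2 : S.X₂ =
      (constantSheaf (Opens.grothendieckTopology Y) AddCommGrpCat).obj (AddCommGrpCat.of ℤ))
    (hX3 : S.X₃ = (TopCat.Sheaf.pushforward AddCommGrpCat ι).obj
      ((constantSheaf (Opens.grothendieckTopology
          (TopCat.of (((U : Set Y)ᶜ : Set Y)))) AddCommGrpCat).obj (AddCommGrpCat.of ℤ)))
    (V : Opens Y)
    (hV : IsZero ((sheafH Y 1 V).obj S.X₂)) :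
    Nonempty ((sheafH Y 1 V).obj S.X₁ ≅ cokernel ((sheafH Y 0 V).map S.g)) := by
  clear hX2 hX3 hι
  haveI := hS.mono_f
  haveI := hS.epi_g
  set F := secΓ Y V with hF
  set CC := Sheaf (Opens.grothendieckTopology Y) AddCommGrpCat
  -- the injective object and the two quotients
  let I : CC := Injective.under S.X₂
  let j : S.X₂ ⟶ I := Injective.ι S.X₂
  let m : S.X₁ ⟶ I := S.f ≫ j
  haveI hm : Mono m := mono_comp _ _
  let p : I ⟶ cokernel m := cokernel.π m
  let p₂ : I ⟶ cokernel j := cokernel.π j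
  let S1 : ShortComplex CC := ShortComplex.mk m p (cokernel.condition m)
  let S2 : ShortComplex CC := ShortComplex.mk j p₂ (cokernel.condition j)
  have hS1 : S1.ShortExact := ⟨ShortComplex.exact_of_g_is_cokernel _ (cokernelIsCokernel m)⟩
  have hS2 : S2.ShortExact := ⟨ShortComplex.exact_of_g_is_cokernel _ (cokernelIsCokernel j)⟩
  -- the induced maps q : X₃ → I/X₁ and r : I/X₁ → I/X₂
  have hgw : S.f ≫ (j ≫ p) = 0 := by
    rw [← Category.assoc]; exact cokernel.condition m
  obtain ⟨q, hq⟩ := CokernelCofork.IsColimit.desc' hS.gIsCokernel (j ≫ p) hgw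
  have hq : S.g ≫ q = j ≫ p := hq
  have hrw : m ≫ p₂ = 0 := by
    show (S.f ≫ j) ≫ p₂ = 0
    rw [Category.assoc, cokernel.condition, comp_zero]
  let r : cokernel m ⟶ cokernel j := cokernel.desc m p₂ hrw
  have hpr : p ≫ r = p₂ := cokernel.π_desc m p₂ hrw
  have hqr : q ≫ r = 0 := by
    rw [← cancel_epi S.g, comp_zero, ← Category.assoc, hq, Category.assoc, hpr,
      cokernel.condition]
  let S3 : ShortComplex CC := ShortComplex.mk q r hqr
  haveI hqmono : Mono q := q_mono S hS j p (cokernel.condition m) hS1.exact q hq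
  have hS3 : S3.Exact := qr_exact S hS j p p₂ (cokernel.condition j) hS2.exact q hq r hpr hqr
  -- apply the left exact functor F
  haveI hFlim : PreservesFiniteLimits F := inferInstanceAs (PreservesFiniteLimits (secΓ Y V))
  have hmap : ∀ (T : ShortComplex CC), T.Exact ∧ Mono T.f →
      ((T.map F).Exact ∧ Mono (F.map T.f)) :=
    ((Functor.preservesFiniteLimits_tfae F).out 3 1).1 hFlim
  have e2 := hmap S2 ⟨hS2.exact, inferInstance⟩
  have e3 := hmap S3 ⟨hS3, hqmono⟩
  -- `F.map p₂` is surjective, since `H¹(X₂) = 0`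
  have hzero : IsZero (cokernel (F.map S2.g)) := by
    refine IsZero.of_iso ?_ (rightDerivedOneIsoCokernel F S2 hS2).symm
    exact hV
  haveI : Epi (F.map S2.g) := Preadditive.epi_of_isZero_cokernel _ hzero
  have surj2 : Function.Surjective (F.map S2.g) :=
    (AddCommGrpCat.epi_iff_surjective _).1 inferInstance
  -- element-wise exactness statements
  have ex2 : ∀ x : (F.obj I), (F.map p₂) x = 0 → ∃ y, (F.map j) y = x := by
    intro x hx
    exact (ShortComplex.ab_exact_iff _).1 e2.1 x hx
  have ex3 : ∀ t : (F.obj (cokernel m)), (F.map r) t = 0 → ∃ s, (F.map q) s = t := by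
    intro t ht
    exact (ShortComplex.ab_exact_iff _).1 e3.1 t ht
  have injq : Function.Injective (F.map q) := (AddCommGrpCat.mono_iff_injective _).1 e3.2
  have exπp : ∀ x : (F.obj (cokernel m)), cokernel.π (F.map p) x = 0 →
      ∃ y, (F.map p) y = x := by
    intro x hx
    exact (ShortComplex.ab_exact_iff
      (ShortComplex.mk (F.map p) (cokernel.π (F.map p)) (cokernel.condition _))).1
      (ShortComplex.exact_of_g_is_cokernel _ (cokernelIsCokernel _)) x hx
  have surjπp : Function.Surjective (cokernel.π (F.map p)) :=
    (AddCommGrpCat.epi_iff_surjective _).1 inferInstance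
  have surjπg : Function.Surjective (cokernel.π (F.map S.g)) :=
    (AddCommGrpCat.epi_iff_surjective _).1 inferInstance
  -- the comparison map α
  have wα : F.map S.g ≫ F.map q ≫ cokernel.π (F.map p) = 0 := by
    rw [← Category.assoc, ← F.map_comp, hq, F.map_comp, Category.assoc,
      cokernel.condition, comp_zero]
  let α : cokernel (F.map S.g) ⟶ cokernel (F.map p) :=
    cokernel.desc (F.map S.g) (F.map q ≫ cokernel.π (F.map p)) wα
  have hαπ : cokernel.π (F.map S.g) ≫ α = F.map q ≫ cokernel.π (F.map p) :=
    cokernel.π_desc _ _ _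
  -- α is injective
  have hinj : Function.Injective α := by
    rw [injective_iff_map_eq_zero]
    intro c hc
    obtain ⟨s, rfl⟩ := surjπg c
    have h2 : cokernel.π (F.map p) ((F.map q) s) = 0 := by
      calc cokernel.π (F.map p) ((F.map q) s)
          = (F.map q ≫ cokernel.π (F.map p)) s := rfl
        _ = (cokernel.π (F.map S.g) ≫ α) s := (ConcreteCategory.congr_hom hαπ s).symm
        _ = α (cokernel.π (F.map S.g) s) := rfl
        _ = 0 := hc
    obtain ⟨x, hx⟩ := exπp _ h2
    have hx2 : (F.map p₂) x = 0 := by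
      calc (F.map p₂) x = (F.map (p ≫ r)) x := by rw [hpr]
        _ = (F.map p ≫ F.map r) x := by rw [F.map_comp]
        _ = (F.map r) ((F.map p) x) := rfl
        _ = (F.map r) ((F.map q) s) := by rw [hx]
        _ = (F.map q ≫ F.map r) s := rfl
        _ = (F.map (q ≫ r)) s := by rw [F.map_comp]
        _ = 0 := by rw [hqr, F.map_zero]; simp
    obtain ⟨y, hy⟩ := ex2 x hx2
    have hgy : (F.map q) ((F.map S.g) y) = (F.map q) s := by
      calc (F.map q) ((F.map S.g) y) = (F.map S.g ≫ F.map q) y := rfl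
        _ = (F.map (S.g ≫ q)) y := by rw [F.map_comp]
        _ = (F.map (j ≫ p)) y := by rw [hq]
        _ = (F.map j ≫ F.map p) y := by rw [F.map_comp]
        _ = (F.map p) ((F.map j) y) := rfl
        _ = (F.map p) x := by rw [hy]
        _ = (F.map q) s := hx
    have hgys : (F.map S.g) y = s := injq hgy
    calc cokernel.π (F.map S.g) s
        = cokernel.π (F.map S.g) ((F.map S.g) y) := by rw [hgys]
      _ = (F.map S.g ≫ cokernel.π (F.map S.g)) y := rfl
      _ = 0 := by rw [cokernel.condition]; simp
  -- α is surjective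
  have hsurj : Function.Surjective α := by
    intro c
    obtain ⟨t, rfl⟩ := surjπp c
    obtain ⟨x, hx⟩ := surj2 ((F.map r) t)
    have hpp2 : (F.map r) ((F.map p) x) = (F.map p₂) x := by
      calc (F.map r) ((F.map p) x) = (F.map p ≫ F.map r) x := rfl
        _ = (F.map (p ≫ r)) x := by rw [F.map_comp]
        _ = (F.map p₂) x := by rw [hpr]
    have hrt : (F.map r) (t - (F.map p) x) = 0 := by
      rw [map_sub, hpp2, hx, sub_self]
    obtain ⟨s, hs⟩ := ex3 _ hrt
    refine ⟨cokernel.π (F.map S.g) s, ?_⟩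
    have hππ : cokernel.π (F.map p) ((F.map p) x) = 0 := by
      calc cokernel.π (F.map p) ((F.map p) x)
          = (F.map p ≫ cokernel.π (F.map p)) x := rfl
        _ = 0 := by rw [cokernel.condition]; simp
    calc α (cokernel.π (F.map S.g) s)
        = (cokernel.π (F.map S.g) ≫ α) s := rfl
      _ = (F.map q ≫ cokernel.π (F.map p)) s := ConcreteCategory.congr_hom hαπ s
      _ = cokernel.π (F.map p) ((F.map q) s) := rfl
      _ = cokernel.π (F.map p) (t - (F.map p) x) := by rw [hs]
      _ = cokernel.π (F.map p) t - cokernel.π (F.map p) ((F.map p) x) := by rw [map_sub]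
      _ = cokernel.π (F.map p) t := by rw [hππ, sub_zero]
  haveI : Mono α := (AddCommGrpCat.mono_iff_injective _).2 hinj
  haveI : Epi α := (AddCommGrpCat.epi_iff_surjective _).2 hsurj
  haveI : IsIso α := isIso_of_mono_of_epi α
  -- assemble
  refine ⟨?_⟩
  have iso1 : (F.rightDerived 1).obj S.X₁ ≅ cokernel (F.map S1.g) :=
    rightDerivedOneIsoCokernel F S1 hS1
  have iso0 : cokernel ((F.rightDerived 0).map S.g) ≅ cokernel (F.map S.g) :=
    cokernel.mapIso _ (F.map S.g) (F.rightDerivedZeroIsoSelf.app S.X₂)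
      (F.rightDerivedZeroIsoSelf.app S.X₃) (F.rightDerivedZeroIsoSelf.hom.naturality S.g)
  exact iso1 ≪≫ (asIso α).symm ≪≫ iso0.symm
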